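/- For the Laurent polynomial P(t) = t^2 + t + 1 + t^{-1} + 2t^{-2} over 𝔽₃, the constant term of P(t)^n is nonzero in 𝔽₃ for all n with 0 ≤ n < 9 = 3^2, yet there exists some n with ct(P^n) = 0 in 𝔽₃. -/

import Mathlib

open LaurentPolynomial Polynomial

noncomputable def P : LaurentPolynomial (ZMod 3) := T 2 + T 1 + 1 + T (-1) + 2 * T (-2)

noncomputable def q' : Polynomial ℤ := X^4 + X^3 + X^2 + X + Polynomial.C 2

noncomputable def q : Polynomial (ZMod 3) := q'.map (Int.castRingHom (ZMod 3))

lemma toLaurent_apply_nat (f : Polynomial (ZMod 3)) (n : ℕ) :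
    (toLaurent f).coeff (n : ℤ) = f.coeff n := by
  rw [coeff_toLaurent]
  exact Finsupp.mapDomain_apply Nat.castEmbedding.injective _ n

lemma hP : P = toLaurent q * T (-2) := by
  have hq : q = X^4 + X^3 + X^2 + X + Polynomial.C 2 := by
    simp [q, q', Polynomial.map_add, Polynomial.map_pow, Polynomial.map_X, Polynomial.map_C,
      map_ofNat]
  rw [hq]
  simp only [map_add, map_pow, Polynomial.toLaurent_X, Polynomial.toLaurent_C, T_pow]
  rw [P, add_mul, add_mul, add_mul, add_mul, ← T_add, ← T_add, ← T_add, ← T_add]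
  norm_num [T_zero, map_ofNat]

lemma key (n : ℕ) : (P ^ n).coeff 0 = ((q'^n).coeff (2*n) : ZMod 3) := by
  have h : P ^ n = toLaurent (q ^ n) * T (-(2*n) : ℤ) := by
    rw [hP, mul_pow, T_pow, map_pow]
    ring_nf
  rw [h]
  have := AddMonoidAlgebra.coeff_mul_single_apply (x := toLaurent (q^n)) (r := (1 : ZMod 3)) (g := (-(2*n):ℤ)) (h := (0:ℤ))
  rw [show (T (-(2*n):ℤ) : LaurentPolynomial (ZMod 3)) = AddMonoidAlgebra.single (-(2*n):ℤ) 1 from rfl, this, mul_one]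
  rw [show ((0:ℤ) + - -(2*n)) = ((2*n : ℕ) : ℤ) by push_cast; ring]
  rw [toLaurent_apply_nat, q, ← Polynomial.map_pow, Polynomial.coeff_map, eq_intCast]

set_option maxHeartbeats 4000000

set_option maxHeartbeats 2000000 in
lemma hq0 : q' ^ 0 = Polynomial.C 1 := by
  simp only [q', map_ofNat, map_one]
  ring

lemma hc0 : (q' ^ 0).coeff 0 = 1 := by
  rw [hq0]
  simp [Polynomial.coeff_add, Polynomial.coeff_C_mul, Polynomial.coeff_X_pow, Polynomial.coeff_X, coeff_C]

lemma hq1 : q' ^ 1 = Polynomial.C 2 + X + X ^ 2 + X ^ 3 + X ^ 4 := by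
  simp only [q', map_ofNat, map_one]
  ring

lemma hc1 : (q' ^ 1).coeff 2 = 1 := by
  rw [hq1]
  simp [Polynomial.coeff_add, Polynomial.coeff_C_mul, Polynomial.coeff_X_pow, Polynomial.coeff_X, coeff_C]

lemma hq2 : q' ^ 2 = Polynomial.C 4 + Polynomial.C 4 * X + Polynomial.C 5 * X ^ 2 + Polynomial.C 6 * X ^ 3 + Polynomial.C 7 * X ^ 4 + Polynomial.C 4 * X ^ 5 + Polynomial.C 3 * X ^ 6 + Polynomial.C 2 * X ^ 7 + X ^ 8 := by
  simp only [q', map_ofNat, map_one]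
  ring

lemma hc2 : (q' ^ 2).coeff 4 = 7 := by
  rw [hq2]
  simp [Polynomial.coeff_add, Polynomial.coeff_C_mul, Polynomial.coeff_X_pow, Polynomial.coeff_X, coeff_C]

lemma hq3 : q' ^ 3 = Polynomial.C 8 + Polynomial.C 12 * X + Polynomial.C 18 * X ^ 2 + Polynomial.C 25 * X ^ 3 + Polynomial.C 33 * X ^ 4 + Polynomial.C 30 * X ^ 5 + Polynomial.C 28 * X ^ 6 + Polynomial.C 24 * X ^ 7 + Polynomial.C 18 * X ^ 8 + Polynomial.C 10 * X ^ 9 + Polynomial.C 6 * X ^ 10 + Polynomial.C 3 * X ^ 11 + X ^ 12 := by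
  simp only [q', map_ofNat, map_one]
  ring

lemma hc3 : (q' ^ 3).coeff 6 = 28 := by
  rw [hq3]
  simp [Polynomial.coeff_add, Polynomial.coeff_C_mul, Polynomial.coeff_X_pow, Polynomial.coeff_X, coeff_C]

lemma hq4 : q' ^ 4 = Polynomial.C 16 + Polynomial.C 32 * X + Polynomial.C 56 * X ^ 2 + Polynomial.C 88 * X ^ 3 + Polynomial.C 129 * X ^ 4 + Polynomial.C 148 * X ^ 5 + Polynomial.C 162 * X ^ 6 + Polynomial.C 164 * X ^ 7 + Polynomial.C 151 * X ^ 8 + Polynomial.C 120 * X ^ 9 + Polynomial.C 92 * X ^ 10 + Polynomial.C 64 * X ^ 11 + Polynomial.C 39 * X ^ 12 + Polynomial.C 20 * X ^ 13 + Polynomial.C 10 * X ^ 14 + Polynomial.C 4 * X ^ 15 + X ^ 16 := by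
  simp only [q', map_ofNat, map_one]
  ring

lemma hc4 : (q' ^ 4).coeff 8 = 151 := by
  rw [hq4]
  simp [Polynomial.coeff_add, Polynomial.coeff_C_mul, Polynomial.coeff_X_pow, Polynomial.coeff_X, coeff_C]

lemma hq5 : q' ^ 5 = Polynomial.C 32 + Polynomial.C 80 * X + Polynomial.C 160 * X ^ 2 + Polynomial.C 280 * X ^ 3 + Polynomial.C 450 * X ^ 4 + Polynomial.C 601 * X ^ 5 + Polynomial.C 745 * X ^ 6 + Polynomial.C 855 * X ^ 7 + Polynomial.C 905 * X ^ 8 + Polynomial.C 865 * X ^ 9 + Polynomial.C 781 * X ^ 10 + Polynomial.C 655 * X ^ 11 + Polynomial.C 505 * X ^ 12 + Polynomial.C 355 * X ^ 13 + Polynomial.C 235 * X ^ 14 + Polynomial.C 141 * X ^ 15 + Polynomial.C 75 * X ^ 16 + Polynomial.C 35 * X ^ 17 + Polynomial.C 15 * X ^ 18 + Polynomial.C 5 * X ^ 19 + X ^ 20 := by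
  simp only [q', map_ofNat, map_one]
  ring

lemma hc5 : (q' ^ 5).coeff 10 = 781 := by
  rw [hq5]
  simp [Polynomial.coeff_add, Polynomial.coeff_C_mul, Polynomial.coeff_X_pow, Polynomial.coeff_X, coeff_C]

lemma hq6 : q' ^ 6 = Polynomial.C 64 + Polynomial.C 192 * X + Polynomial.C 432 * X ^ 2 + Polynomial.C 832 * X ^ 3 + Polynomial.C 1452 * X ^ 4 + Polynomial.C 2172 * X ^ 5 + Polynomial.C 2981 * X ^ 6 + Polynomial.C 3786 * X ^ 7 + Polynomial.C 4461 * X ^ 8 + Polynomial.C 4836 * X ^ 9 + Polynomial.C 4932 * X ^ 10 + Polynomial.C 4716 * X ^ 11 + Polynomial.C 4216 * X ^ 12 + Polynomial.C 3516 * X ^ 13 + Polynomial.C 2766 * X ^ 14 + Polynomial.C 2032 * X ^ 15 + Polynomial.C 1386 * X ^ 16 + Polynomial.C 876 * X ^ 17 + Polynomial.C 516 * X ^ 18 + Polynomial.C 276 * X ^ 19 + Polynomial.C 132 * X ^ 20 + Polynomial.C 56 * X ^ 21 + Polynomial.C 21 * X ^ 22 + Polynomial.C 6 * X ^ 23 +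 X ^ 24 := by
  simp only [q', map_ofNat, map_one]
  ring

lemma hc6 : (q' ^ 6).coeff 12 = 4216 := by
  rw [hq6]
  simp [Polynomial.coeff_add, Polynomial.coeff_C_mul, Polynomial.coeff_X_pow, Polynomial.coeff_X, coeff_C]

lemma hq7 : q' ^ 7 = Polynomial.C 128 + Polynomial.C 448 * X + Polynomial.C 1120 * X ^ 2 + Polynomial.C 2352 * X ^ 3 + Polynomial.C 4424 * X ^ 4 + Polynomial.C 7252 * X ^ 5 + Polynomial.C 10850 * X ^ 6 + Polynomial.C 15009 * X ^ 7 + Polynomial.C 19313 * X ^ 8 + Polynomial.C 23072 * X ^ 9 + Polynomial.C 25928 * X ^ 10 + Polynomial.C 27447 * X ^ 11 + Polynomial.C 27377 * X ^ 12 + Polynomial.C 25732 * X ^ 13 + Polynomial.C 22912 * X ^ 14 + Polynomial.C 19278 * X ^ 15 + Polynomial.C 15302 * X ^ 16 + Polynomial.C 11452 * X ^ 17 + Polynomial.C 8092 * X ^ 18 + Polynomial.C 5362 * X ^ 19 + Polynomial.C 3318 * X ^ 20 + Polynomial.C 1912 * X ^ 21 + Polynomial.C 1022 * X ^ 22 +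 Polynomial.C 497 * X ^ 23 + Polynomial.C 217 * X ^ 24 + Polynomial.C 84 * X ^ 25 + Polynomial.C 28 * X ^ 26 + Polynomial.C 7 * X ^ 27 + X ^ 28 := by
  simp only [q', map_ofNat, map_one]
  ring

lemma hc7 : (q' ^ 7).coeff 14 = 22912 := by
  rw [hq7]
  simp [Polynomial.coeff_add, Polynomial.coeff_C_mul, Polynomial.coeff_X_pow, Polynomial.coeff_X, coeff_C]

lemma hq8 : q' ^ 8 = Polynomial.C 256 + Polynomial.C 1024 * X + Polynomial.C 2816 * X ^ 2 + Polynomial.C 6400 * X ^ 3 + Polynomial.C 12896 * X ^ 4 + Polynomial.C 22848 * X ^ 5 + Polynomial.C 36848 * X ^ 6 + Polynomial.C 54896 * X ^ 7 + Polynomial.C 76161 * X ^ 8 + Polynomial.C 98568 * X ^ 9 + Polynomial.C 120100 * X ^ 10 + Polynomial.C 138216 * X ^ 11 + Polynomial.C 150514 * X ^ 12 + Polynomial.C 155288 * X ^ 13 + Polynomial.C 152308 * X ^ 14 + Polynomial.C 142024 * X ^ 15 + Polynomial.C 125903 * X ^ 16 + Polynomial.C 106128 * X ^ 17 + Polynomial.C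 85128 * X ^ 18 + Polynomial.C 64848 * X ^ 19 + Polynomial.C 46844 * X ^ 20 + Polynomial.C 32048 * X ^ 21 + Polynomial.C 20728 * X ^ 22 + Polynomial.C 12608 * X ^ 23 + Polynomial.C 7183 * X ^ 24 + Polynomial.C 3816 * X ^ 25 + Polynomial.C 1876 * X ^ 26 + Polynomial.C 840 * X ^ 27 + Polynomial.C 338 * X ^ 28 + Polynomial.C 120 * X ^ 29 + Polynomial.C 36 * X ^ 30 + Polynomial.C 8 * X ^ 31 + X ^ 32 := by
  simp only [q', map_ofNat, map_one]
  ring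

lemma hc8 : (q' ^ 8).coeff 16 = 125903 := by
  rw [hq8]
  simp [Polynomial.coeff_add, Polynomial.coeff_C_mul, Polynomial.coeff_X_pow, Polynomial.coeff_X, coeff_C]

lemma hq23 : q' ^ 23 = Polynomial.C 8388608 + Polynomial.C 96468992 * X + Polynomial.C 627048448 * X ^ 2 + Polynomial.C 3014656000 * X ^ 3 + Polynomial.C 11901861888 * X ^ 4 + Polynomial.C 40655650816 * X ^ 5 + Polynomial.C 123923464192 * X ^ 6 + Polynomial.C 343964712960 * X ^ 7 + Polynomial.C 881856217088 * X ^ 8 + Polynomial.C 2110371495936 * X ^ 9 + Polynomial.C 4751948365824 * X ^ 10 + Polynomial.C 10131331997696 * X ^ 11 + Polynomial.C 20556014047232 * X ^ 12 + Polynomial.C 39855329314816 * X ^ 13 + Polynomial.C 74097671164928 * X ^ 14 + Polynomial.C 132481186679296 * X ^ 15 + Polynomial.C 228354829253760 * X ^ 16 + Polynomial.C 380274809464000 * X ^ 17 + Polynomial.C 612941560165088 * X ^ 18 + Polynomial.C 957803542106224 * X ^ 19 + Polynomial.C 1453070874211528 * X ^ 20 + Polynomial.C 2142869965183860 * X ^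 21 + Polynomial.C 3075305345849890 * X ^ 22 + Polynomial.C 4299286649686209 * X ^ 23 + Polynomial.C 5860128949426097 * X ^ 24 + Polynomial.C 7794131655527112 * X ^ 25 + Polynomial.C 10122560262911112 * X ^ 26 + Polynomial.C 12845660472775163 * X ^ 27 + Polynomial.C 15937484370915877 * X ^ 28 + Polynomial.C 19342362747476604 * X ^ 29 + Polynomial.C 22973787656671940 * X ^ 30 + Polynomial.C 26716265210457020 * X ^ 31 + Polynomial.C 30430374850949612 * X ^ 32 + Polynomial.C 33960866306053644 * X ^ 33 + Polynomial.C 37147198493585076 * X ^ 34 + Polynomial.C 39835544655318220 * X ^ 35 + Polynomial.C 41891021168529308 * X ^ 36 + Polynomial.C 43208794261490028 * X ^ 37 + Polynomial.C 43722804249120876 * X ^ 38 + Polynomial.C 43411113186297472 * X ^ 39 + Polynomial.C 42297290310219120 * X ^ 40 + Polynomial.C 40447737477256780 * X ^ 41 + Polynomial.C 37965348718001716 * X ^ 42 + Polynomial.C 34980319530399672 * X ^ 43 + Polynomial.C 31639213065438608 * X ^ 44 + Polynomial.C 28093516788257004 * X ^ 45 + Polynomial.C 24488878266083700 * X ^ 46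 + Polynomial.C 20956013832913628 * X ^ 47 + Polynomial.C 17603982271555148 * X ^ 48 + Polynomial.C 14516162434145020 * X ^ 49 + Polynomial.C 11748925167330692 * X ^ 50 + Polynomial.C 9332693954543212 * X ^ 51 + Polynomial.C 7274878242642252 * X ^ 52 + Polynomial.C 5564053056963940 * X ^ 53 + Polynomial.C 4174745250415696 * X ^ 54 + Polynomial.C 3072253709995962 * X ^ 55 + Polynomial.C 2217052659767114 * X ^ 56 + Polynomial.C 1568475673820620 * X ^ 57 + Polynomial.C 1087527344380756 * X ^ 58 + Polynomial.C 738799850690422 * X ^ 59 + Polynomial.C 491570675666994 * X ^ 60 + Polynomial.C 320220789452916 * X ^ 61 + Polynomial.C 204141522236300 * X ^ 62 + Polynomial.C 127299205910932 * X ^ 63 + Polynomial.C 77607776130852 * X ^ 64 + Polynomial.C 46229460052644 * X ^ 65 + Polynomial.C 26889875833244 * X ^ 66 + Polynomial.C 15261876494340 * X ^ 67 + Polynomial.C 8445702128372 * X ^ 68 + Polynomial.C 4552964106980 * X ^ 69 + Polynomial.C 2388705206484 * X ^ 70 + Polynomial.C 1218347150152 * X ^ 71 + Polynomial.C 603383770264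 * X ^ 72 + Polynomial.C 289760176420 * X ^ 73 + Polynomial.C 134721847260 * X ^ 74 + Polynomial.C 60538665792 * X ^ 75 + Polynomial.C 26239554968 * X ^ 76 + Polynomial.C 10944911652 * X ^ 77 + Polynomial.C 4381726780 * X ^ 78 + Polynomial.C 1678437972 * X ^ 79 + Polynomial.C 612911268 * X ^ 80 + Polynomial.C 212430484 * X ^ 81 + Polynomial.C 69511244 * X ^ 82 + Polynomial.C 21333972 * X ^ 83 + Polynomial.C 6091228 * X ^ 84 + Polynomial.C 1600984 * X ^ 85 + Polynomial.C 382030 * X ^ 86 + Polynomial.C 81213 * X ^ 87 + Polynomial.C 14973 * X ^ 88 + Polynomial.C 2300 * X ^ 89 + Polynomial.C 276 * X ^ 90 + Polynomial.C 23 * X ^ 91 + X ^ 92 := by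
  simp only [q', map_ofNat, map_one]
  ring

lemma hc23 : (q' ^ 23).coeff 46 = 24488878266083700 := by
  rw [hq23]
  simp [Polynomial.coeff_add, Polynomial.coeff_C_mul, Polynomial.coeff_X_pow, Polynomial.coeff_X, coeff_C]


lemma hc1' : q'.coeff 2 = 1 := by rw [← pow_one q']; exact hc1

theorem stmt7 :
    (∀ n : ℕ, n < 3 ^ 2 → (P ^ n).coeff 0 ≠ 0) ∧ ∃ n : ℕ, (P ^ n).coeff 0 = 0 := by
  constructor
  · intro n hn
    norm_num at hn
    interval_cases n <;> rw [key] <;>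
      norm_num [hc0, hc1', hc2, hc3, hc4, hc5, hc6, hc7, hc8] <;> decide
  · refine ⟨23, ?_⟩
    rw [key, hc23, ZMod.intCast_zmod_eq_zero_iff_dvd]
    norm_num
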